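/- arXiv:1312.4356 — 3 statements merged into one kernel-verified Lean document; each statement's English description precedes it below -/
import Mathlib

section
/- Let V be a real Hilbert space and ε₀ > 0. For each ε ∈ [0, ε₀), let a_ε : V × V → ℝ be a bilinear form, l_ε : V → ℝ a linear form, u_ε ∈ V a solution of the state equation a_ε(u_ε, v) = l_ε(v) for all v ∈ V, and J_ε : V → ℝ a functional that is Fréchet differentiable at u₀, and let p_ε ∈ V be an adjoint state satisfying a_ε(φ, p_ε) = −DJ_ε(u₀)(φ) for all φ ∈ V. Suppose there exist real numbers δa, δl, δJ₁, δJ₂ and a function f : [0, ε₀) → ℝ with f(ε) ≥ 0 and f(ε) → 0 as ε → 0⁺, such that as ε → 0⁺: (a_ε − a₀)(u₀, p_ε) = f(ε)·δa + o(f(ε)); (l_ε − l₀)(p_ε) = f(ε)·δl + o(f(ε)); J_ε(u_ε) = J_ε(u₀) + DJ_ε(u₀)(u_ε − u₀) + f(ε)·δJ₁ + o(f(ε)); and J_ε(u₀) = J₀(u₀) + f(ε)·δJ₂ + o(f(ε)). Then the cost function j(ε) := J_ε(u_ε) satisfies j(ε) − j(0) = f(ε)·(δa − δl + δJ₁ +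 δJ₂) + o(f(ε)) as ε → 0⁺. -/
open Filter Asymptotics

/-- Amstutz's abstract adjoint-method proposition for topological derivatives:
under first-order expansions of the bilinear form, the linear form and the cost
functional, the cost function `j(ε) = J_ε(u_ε)` admits the topological asymptotic
expansion `j(ε) - j(0) = f(ε)(δa - δl + δJ₁ + δJ₂) + o(f(ε))` as `ε → 0⁺`. -/
theorem onoff_topderiv_stmt0
    {V : Type*} [NormedAddCommGroup V] [InnerProductSpace ℝ V] [CompleteSpace V]
    (ε₀ : ℝ) (hε₀ : 0 < ε₀)
    (a : ℝ → V →ₗ[ℝ] V →ₗ[ℝ] ℝ) (l : ℝ → V →ₗ[ℝ] ℝ)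
    (u p : ℝ → V) (J : ℝ → V → ℝ) (DJ : ℝ → V →L[ℝ] ℝ)
    (f : ℝ → ℝ) (δa δl δJ₁ δJ₂ : ℝ)
    (hstate : ∀ ε ∈ Set.Ico (0:ℝ) ε₀, ∀ v : V, a ε (u ε) v = l ε v)
    (hdiff : ∀ ε ∈ Set.Ico (0:ℝ) ε₀, HasFDerivAt (J ε) (DJ ε) (u 0))
    (hadj : ∀ ε ∈ Set.Ico (0:ℝ) ε₀, ∀ φ : V, a ε φ (p ε) = - DJ ε φ)
    (hf_nonneg : ∀ ε ∈ Set.Ico (0:ℝ) ε₀, 0 ≤ f ε)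
    (hf_lim : Tendsto f (nhdsWithin 0 (Set.Ioi 0)) (nhds 0))
    (ha : (fun ε => a ε (u 0) (p ε) - a 0 (u 0) (p ε) - f ε * δa)
            =o[nhdsWithin 0 (Set.Ioi 0)] f)
    (hl : (fun ε => l ε (p ε) - l 0 (p ε) - f ε * δl)
            =o[nhdsWithin 0 (Set.Ioi 0)] f)
    (hJ₁ : (fun ε => J ε (u ε) - J ε (u 0) - DJ ε (u ε - u 0) - f ε * δJ₁)
            =o[nhdsWithin 0 (Set.Ioi 0)] f)
    (hJ₂ : (fun ε => J ε (u 0) - J 0 (u 0) - f ε * δJ₂)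
            =o[nhdsWithin 0 (Set.Ioi 0)] f) :
    (fun ε => J ε (u ε) - J 0 (u 0) - f ε * (δa - δl + δJ₁ + δJ₂))
      =o[nhdsWithin 0 (Set.Ioi 0)] f := by
  have hsum := ((ha.sub hl).add hJ₁).add hJ₂
  refine hsum.congr' ?_ EventuallyEq.rfl
  have hmem : ∀ᶠ ε in nhdsWithin 0 (Set.Ioi 0), ε ∈ Set.Ico (0:ℝ) ε₀ := by
    filter_upwards [Ioo_mem_nhdsGT_of_mem (by simp [hε₀] : (0:ℝ) ∈ Set.Ico 0 ε₀)]
      with ε hε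
    exact ⟨hε.1.le, hε.2⟩
  filter_upwards [hmem] with ε hε
  have h0 : (0:ℝ) ∈ Set.Ico (0:ℝ) ε₀ := ⟨le_refl 0, hε₀⟩
  have hDJ : DJ ε (u ε - u 0) =
      (a ε (u 0) (p ε) - a 0 (u 0) (p ε)) - (l ε (p ε) - l 0 (p ε)) := by
    have h1 : a ε (u ε - u 0) (p ε) = - DJ ε (u ε - u 0) := hadj ε hε _
    have h2 : a ε (u ε) (p ε) = l ε (p ε) := hstate ε hε _
    have h3 : a 0 (u 0) (p ε) = l 0 (p ε) := hstate 0 h0 _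
    have h4 : a ε (u ε - u 0) (p ε) = a ε (u ε) (p ε) - a ε (u 0) (p ε) := by
      simp [map_sub]
    rw [h4, h2] at h1
    linarith
  rw [hDJ]
  ring
end

section
/- Let V be a real Hilbert space. Let a_ε : V × V → ℝ be a bilinear form, l_ε : V → ℝ a linear form, and let a₀ : V × V → ℝ be bilinear and l₀ : V → ℝ linear. Let u_ε, u₀, p_ε ∈ V and let J_ε : V → ℝ be Fréchet differentiable at u₀. Assume: a_ε(u_ε, v) = l_ε(v) for all v ∈ V (perturbed state equation); a₀(u₀, v) = l₀(v) for all v ∈ V (unperturbed state equation); and a_ε(φ, p_ε) = −DJ_ε(u₀)(φ) for all φ ∈ V (adjoint equation). Then DJ_ε(u₀)(u_ε − u₀) = (a_ε − a₀)(u₀, p_ε) − (l_ε − l₀)(p_ε). -/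
/-- The key algebraic identity in the proof of Amstutz's adjoint-method proposition:
if `u_ε` solves the perturbed state equation, `u₀` the unperturbed one, and `p_ε` the
adjoint equation, then `DJ_ε(u₀)(u_ε − u₀) = (a_ε − a₀)(u₀, p_ε) − (l_ε − l₀)(p_ε)`. -/
theorem onoff_topderiv_stmt1
    {V : Type*} [NormedAddCommGroup V] [InnerProductSpace ℝ V] [CompleteSpace V]
    (aε a₀ : V →ₗ[ℝ] V →ₗ[ℝ] ℝ) (lε l₀ : V →ₗ[ℝ] ℝ)
    (uε u₀ pε : V) (Jε : V → ℝ) (DJε : V →L[ℝ] ℝ)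
    (hdiff : HasFDerivAt Jε DJε u₀)
    (hstateε : ∀ v : V, aε uε v = lε v)
    (hstate₀ : ∀ v : V, a₀ u₀ v = l₀ v)
    (hadj : ∀ φ : V, aε φ pε = - DJε φ) :
    DJε (uε - u₀) = (aε u₀ pε - a₀ u₀ pε) - (lε pε - l₀ pε) := by
  have h1 := hadj (uε - u₀)
  have h2 : aε (uε - u₀) pε = lε pε - aε u₀ pε := by
    simp [map_sub, hstateε pε]
  rw [h2] at h1
  rw [hstate₀ pε] at *
  linarith
end

section
/- Let V be a real Hilbert space. Let a_ε : V × V → ℝ be bilinear, l_ε : V → ℝ linear, a₀ : V × V → ℝ bilinear, l₀ : V → ℝ linear, let u_ε, u₀, p_ε ∈ V, and let J_ε, J₀ : V → ℝ with J_ε Fréchet differentiable at u₀. Assume a_ε(u_ε, v) = l_ε(v) for all v ∈ V, a₀(u₀, v) = l₀(v) for all v ∈ V, and a_ε(φ, p_ε) = −DJ_ε(u₀)(φ) for all φ ∈ V. Then the following exact decomposition of the variation of the cost holds: J_ε(u_ε) − J₀(u₀) = (a_ε − a₀)(u₀, p_ε) − (l_ε − l₀)(p_ε) + [J_ε(u_ε)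 − J_ε(u₀) − DJ_ε(u₀)(u_ε − u₀)] + [J_ε(u₀) − J₀(u₀)]. -/
/-- Exact decomposition of the variation of the cost in Amstutz's adjoint method:
`J_ε(u_ε) − J₀(u₀) = (a_ε − a₀)(u₀, p_ε) − (l_ε − l₀)(p_ε)
  + [J_ε(u_ε) − J_ε(u₀) − DJ_ε(u₀)(u_ε − u₀)] + [J_ε(u₀) − J₀(u₀)]`. -/
theorem onoff_topderiv_stmt2
    {V : Type*} [NormedAddCommGroup V] [InnerProductSpace ℝ V] [CompleteSpace V]
    (aε a₀ : V →ₗ[ℝ] V →ₗ[ℝ] ℝ) (lε l₀ : V →ₗ[ℝ] ℝ)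
    (uε u₀ pε : V) (Jε J₀ : V → ℝ) (DJε : V →L[ℝ] ℝ)
    (hdiff : HasFDerivAt Jε DJε u₀)
    (hstateε : ∀ v : V, aε uε v = lε v)
    (hstate₀ : ∀ v : V, a₀ u₀ v = l₀ v)
    (hadj : ∀ φ : V, aε φ pε = - DJε φ) :
    Jε uε - J₀ u₀ =
      (aε u₀ pε - a₀ u₀ pε) - (lε pε - l₀ pε)
        + (Jε uε - Jε u₀ - DJε (uε - u₀)) + (Jε u₀ - J₀ u₀) := by
  have h1 : DJε (uε - u₀) = -(aε uε pε) + aε u₀ pε := by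
    rw [map_sub]
    have h2 := hadj uε
    have h3 := hadj u₀
    linarith
  rw [h1, hstateε pε, hstate₀ pε]
  ring
end
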